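/- For integers α ≥ 1 and d ≥ 2, the identity C(αd-1, d-1) = 1 + Σ_{μ=1}^{α-1} Σ_{τ=1}^{d-1} C((α-μ)d - 1, d-τ-1) · C(d, τ) holds. -/

import Mathlib

/-- For integers `α ≥ 1` and `d ≥ 2`,
`C(αd-1, d-1) = 1 + Σ_{μ=1}^{α-1} Σ_{τ=1}^{d-1} C((α-μ)d - 1, d-τ-1) · C(d, τ)`. -/
theorem choose_identity (α d : ℕ) (hα : 1 ≤ α) (hd : 2 ≤ d) :
    Nat.choose (α * d - 1) (d - 1) =
      1 + ∑ μ ∈ Finset.Icc 1 (α - 1), ∑ τ ∈ Finset.Icc 1 (d - 1),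
        Nat.choose ((α - μ) * d - 1) (d - τ - 1) * Nat.choose d τ := by
  induction α, hα using Nat.le_induction with
  | base => simp
  | succ α hα IH =>
    have hmd : 1 ≤ α * d := Nat.one_le_iff_ne_zero.2 (by positivity)
    have h1 : (α + 1) * d - 1 = (α * d - 1) + d := by
      have : (α + 1) * d = α * d + d := by ring
      omega
    -- Vandermonde
    have key : ((α * d - 1) + d).choose (d - 1) =
        (α * d - 1).choose (d - 1) +
          ∑ τ ∈ Finset.Icc 1 (d - 1),
            (α * d - 1).choose (d - τ - 1) * d.choose τ := by
      rw [Nat.add_choose_eq]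
      rw [Finset.Nat.sum_antidiagonal_eq_sum_range_succ_mk]
      have hd1 : d - 1 + 1 = (d - 1) + 1 := rfl
      rw [Finset.sum_range_succ]
      simp only [Nat.sub_self, Nat.choose_zero_right, mul_one]
      rw [add_comm]
      congr 1
      refine Finset.sum_nbij' (fun k => d - 1 - k) (fun τ => d - 1 - τ) ?_ ?_ ?_ ?_ ?_
      · intro k hk
        simp only [Finset.mem_range] at hk
        simp only [Finset.mem_Icc]
        omega
      · intro τ hτ
        simp only [Finset.mem_Icc] at hτ
        simp only [Finset.mem_range]
        omega
      · intro k hk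
        simp only [Finset.mem_range] at hk
        omega
      · intro τ hτ
        simp only [Finset.mem_Icc] at hτ
        omega
      · intro k hk
        simp only [Finset.mem_range] at hk
        rw [show d - (d - 1 - k) - 1 = k from by omega, show d - 1 - k = d - (k+1) from by omega]
    rw [h1, key, IH]
    -- split off μ = 1 on the RHS
    rw [show (∑ μ ∈ Finset.Icc 1 (α + 1 - 1), ∑ τ ∈ Finset.Icc 1 (d - 1),
        ((α + 1 - μ) * d - 1).choose (d - τ - 1) * d.choose τ)
      = ∑ μ ∈ Finset.Ico 1 (α + 1), ∑ τ ∈ Finset.Icc 1 (d - 1),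
        ((α + 1 - μ) * d - 1).choose (d - τ - 1) * d.choose τ from by
        rw [← Finset.Ico_add_one_right_eq_Icc, show α + 1 - 1 + 1 = α + 1 from by omega]]
    rw [Finset.sum_Ico_eq_sum_range]
    have hr : α + 1 - 1 = (α - 1) + 1 := by omega
    rw [hr, Finset.sum_range_succ']
    have h2 : ∀ i ∈ Finset.range (α - 1),
        (∑ τ ∈ Finset.Icc 1 (d - 1),
          ((α + 1 - (1 + (i + 1))) * d - 1).choose (d - τ - 1) * d.choose τ)
        = ∑ τ ∈ Finset.Icc 1 (d - 1),
          ((α - (1 + i)) * d - 1).choose (d - τ - 1) * d.choose τ := by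
      intro i _
      apply Finset.sum_congr rfl
      intro τ _
      rw [show α + 1 - (1 + (i + 1)) = α - (1 + i) from by omega]
    rw [Finset.sum_congr rfl h2]
    rw [show (∑ μ ∈ Finset.Icc 1 (α - 1), ∑ τ ∈ Finset.Icc 1 (d - 1),
        ((α - μ) * d - 1).choose (d - τ - 1) * d.choose τ)
      = ∑ i ∈ Finset.range (α - 1), ∑ τ ∈ Finset.Icc 1 (d - 1),
        ((α - (1 + i)) * d - 1).choose (d - τ - 1) * d.choose τ from by
        rw [← Finset.Ico_add_one_right_eq_Icc, Finset.sum_Ico_eq_sum_range]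
        simp [Nat.succ_sub_one]]
    have h3 : (∑ τ ∈ Finset.Icc 1 (d - 1),
        ((α + 1 - (1 + 0)) * d - 1).choose (d - τ - 1) * d.choose τ)
      = ∑ τ ∈ Finset.Icc 1 (d - 1),
        (α * d - 1).choose (d - τ - 1) * d.choose τ := by
      apply Finset.sum_congr rfl
      intro τ _
      rw [show α + 1 - (1 + 0) = α from by omega]
    rw [h3]
    omega
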